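/- Under the CCB-IV assumptions (i), (ii) and (iv) (completeness is not needed), the following identification identity holds: E[Y | Z ; R_Z = 1] = E[g*(A, X) | Z ; R_Z = 1] almost surely, where g*(x, a) = f(a, x) + e(x) is the CATE. -/

import Mathlib

open MeasureTheory ProbabilityTheory MeasurableSpace Filter Topology

section CCBAux
set_option linter.unusedSectionVars false
variable {Ω : Type*} {mΩ : MeasurableSpace Ω} {μ : Measure Ω} [IsProbabilityMeasure μ]

lemma ccb_integrable_of_bdd {k : Ω → ℝ} (hk : AEStronglyMeasurable k μ) {C : ℝ}
    (hC : ∀ ω, |k ω| ≤ C) : Integrable k μ :=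
  (integrable_const C).mono' hk (Eventually.of_forall fun ω => by
    simpa [Real.norm_eq_abs] using hC ω)

lemma ccb_indicator_abs_le (s : Set Ω) (ω : Ω) : |s.indicator (fun _ => (1:ℝ)) ω| ≤ 1 := by
  by_cases hω : ω ∈ s <;> simp [Set.indicator_apply, hω]

lemma ccb_integral_mul_condexp {m : MeasurableSpace Ω} (hm : m ≤ mΩ) {V h : Ω → ℝ}
    (hV : Measurable[m] V) {C : ℝ} (hVb : ∀ ω, |V ω| ≤ C) (hh : Integrable h μ) :
    ∫ ω, V ω * h ω ∂μ = ∫ ω, V ω * (μ[h|m]) ω ∂μ := by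
  have hVsm : StronglyMeasurable[m] V := hV.stronglyMeasurable
  have hVm : AEStronglyMeasurable[mΩ] V μ := (hVsm.mono hm).aestronglyMeasurable
  have h1 : Integrable (V * h) μ :=
    hh.bdd_mul hVm (Eventually.of_forall fun ω => by simpa [Real.norm_eq_abs] using hVb ω)
  have h2 := condExp_mul_of_stronglyMeasurable_left (μ := μ) hVsm h1 hh
  calc ∫ ω, V ω * h ω ∂μ = ∫ ω, (V * h) ω ∂μ := rfl
    _ = ∫ ω, (μ[V * h|m]) ω ∂μ := (integral_condExp hm).symm
    _ = ∫ ω, (V * μ[h|m]) ω ∂μ := integral_congr_ae h2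
    _ = ∫ ω, V ω * (μ[h|m]) ω ∂μ := rfl

lemma ccb_condexp_bound {m : MeasurableSpace Ω} (hm : m ≤ mΩ) {k : Ω → ℝ} (hk : Integrable k μ)
    {C : ℝ} (hC : ∀ ω, |k ω| ≤ C) : ∀ᵐ ω ∂μ, |(μ[k|m]) ω| ≤ C := by
  have h1 : μ[k|m] ≤ᵐ[μ] μ[(fun _ => C)|m] :=
    condExp_mono hk (integrable_const C) (Eventually.of_forall fun ω => (abs_le.mp (hC ω)).2)
  have h2 : μ[(fun _ => -C)|m] ≤ᵐ[μ] μ[k|m] :=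
    condExp_mono (integrable_const (-C)) hk (Eventually.of_forall fun ω => (abs_le.mp (hC ω)).1)
  rw [condExp_const hm] at h1 h2
  filter_upwards [h1, h2] with ω hω1 hω2
  exact abs_le.mpr ⟨hω2, hω1⟩

lemma ccb_setIntegral_eq {s : Set Ω} (hs : MeasurableSet s) (q : Ω → ℝ) :
    ∫ ω in s, q ω ∂μ = ∫ ω, s.indicator (fun _ => (1:ℝ)) ω * q ω ∂μ := by
  rw [← integral_indicator hs]
  congr 1; funext ω; by_cases hω : ω ∈ s <;> simp [Set.indicator_apply, hω]

lemma ccb_setIntegral_inter {s t : Set Ω} (ht : MeasurableSet t) (q : Ω → ℝ) :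
    ∫ ω in s ∩ t, q ω ∂μ = ∫ ω in s, t.indicator (fun _ => (1:ℝ)) ω * q ω ∂μ := by
  rw [← setIntegral_indicator ht]
  congr 1; funext ω; by_cases hω : ω ∈ t <;> simp [Set.indicator_apply, hω]

end CCBAux
section CCBAux2
set_option linter.unusedSectionVars false
variable {Ω : Type*} [mΩ : MeasurableSpace Ω] {μ : Measure Ω} [IsProbabilityMeasure μ]

/-- Core factorization: under conditional independence of `g` and `h` given `m`,
`∫_s 1_{g∈T} h = ∫_s E[1_{g∈T}|m] E[h|m]` for `s ∈ m`. -/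
lemma ccb_factorization [StandardBorelSpace Ω] [Nonempty Ω]
    {m : MeasurableSpace Ω} (hm : m ≤ mΩ)
    {β : Type*} [MeasurableSpace β] {g : Ω → β} (hg : Measurable[mΩ] g)
    {h : Ω → ℝ} (hh : Measurable[mΩ] h) {C : ℝ} (hhb : ∀ ω, |h ω| ≤ C)
    (hind : CondIndepFun m hm g h μ)
    {T : Set β} (hT : MeasurableSet T) {s : Set Ω} (hs : MeasurableSet[m] s) :
    ∫ ω in s, (g ⁻¹' T).indicator (fun _ => (1:ℝ)) ω * h ω ∂μ
      = ∫ ω in s, (μ[(g ⁻¹' T).indicator (fun _ => (1:ℝ))|m]) ω * (μ[h|m]) ω ∂μ := by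
  have hC0 : 0 ≤ C := le_trans (abs_nonneg _) (hhb Classical.ofNonempty)
  set iT : Ω → ℝ := (g ⁻¹' T).indicator (fun _ => (1:ℝ)) with hiT_def
  have hiT_meas : Measurable[mΩ] iT := measurable_const.indicator (hg hT)
  have hiT_bdd : ∀ ω, |iT ω| ≤ 1 := ccb_indicator_abs_le _
  have hiT_int : Integrable iT μ := ccb_integrable_of_bdd (hiT_meas.aestronglyMeasurable (μ := μ)) hiT_bdd
  have hWbdd : ∀ᵐ ω ∂μ, |(μ[iT|m]) ω| ≤ 1 := ccb_condexp_bound hm hiT_int hiT_bdd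
  have hWmeas : AEStronglyMeasurable[mΩ] (μ[iT|m]) μ :=
    (stronglyMeasurable_condExp.mono hm).aestronglyMeasurable
  -- base case : indicators of Borel sets of ℝ
  have base : ∀ T' : Set ℝ, MeasurableSet T' →
      ∫ ω in s, iT ω * (h ⁻¹' T').indicator (fun _ => (1:ℝ)) ω ∂μ
        = ∫ ω in s, (μ[iT|m]) ω * (μ[(h ⁻¹' T').indicator (fun _ => (1:ℝ))|m]) ω ∂μ := by
    intro T' hT'
    have hmul : (fun ω => iT ω * (h ⁻¹' T').indicator (fun _ => (1:ℝ)) ω)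
        = (g ⁻¹' T ∩ h ⁻¹' T').indicator (fun _ => (1:ℝ)) := by
      funext ω
      by_cases h1 : ω ∈ g ⁻¹' T <;> by_cases h2 : ω ∈ h ⁻¹' T' <;>
        simp [iT, Set.indicator_apply, h1, h2]
    have hint : Integrable ((g ⁻¹' T ∩ h ⁻¹' T').indicator (fun _ => (1:ℝ))) μ := by
      have hmeas : Measurable[mΩ] ((g ⁻¹' T ∩ h ⁻¹' T').indicator (fun _ => (1:ℝ))) :=
        measurable_const.indicator ((hg hT).inter (hh hT'))
      exact
      ccb_integrable_of_bdd
        (measurable_const.indicator ((hg hT).inter (hh hT'))).aestronglyMeasurable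
        (ccb_indicator_abs_le _)
    have hfac := (condIndepFun_iff_condExp_inter_preimage_eq_mul hg hh).mp hind T T' hT hT'
    calc ∫ ω in s, iT ω * (h ⁻¹' T').indicator (fun _ => (1:ℝ)) ω ∂μ
        = ∫ ω in s, (g ⁻¹' T ∩ h ⁻¹' T').indicator (fun _ => (1:ℝ)) ω ∂μ := by
          exact integral_congr_ae (Eventually.of_forall fun ω => congrFun hmul ω)
      _ = ∫ ω in s, (μ[(g ⁻¹' T ∩ h ⁻¹' T').indicator (fun _ => (1:ℝ))|m]) ω ∂μ :=
          (setIntegral_condExp hm hint hs).symm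
      _ = ∫ ω in s, (μ[iT|m]) ω * (μ[(h ⁻¹' T').indicator (fun _ => (1:ℝ))|m]) ω ∂μ :=
          integral_congr_ae (ae_restrict_of_ae hfac)
  -- simple-function step
  have hsimple : ∀ ψ : SimpleFunc ℝ ℝ,
      ∫ ω in s, iT ω * ψ (h ω) ∂μ
        = ∫ ω in s, (μ[iT|m]) ω * (μ[fun ω => ψ (h ω)|m]) ω ∂μ := by
    intro ψ
    induction ψ using SimpleFunc.induction with
    | @const c T' hT' =>
      set iT' : Ω → ℝ := (h ⁻¹' T').indicator (fun _ => (1:ℝ)) with hiT'_def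
      have happ : ∀ ω, (SimpleFunc.piecewise T' hT'
          (SimpleFunc.const ℝ c) (SimpleFunc.const ℝ 0)) (h ω) = c * iT' ω := by
        intro ω
        by_cases hω : h ω ∈ T' <;>
          simp [SimpleFunc.piecewise_apply, hiT'_def, Set.indicator_apply, hω]
      have hfun : (fun ω => (SimpleFunc.piecewise T' hT'
          (SimpleFunc.const ℝ c) (SimpleFunc.const ℝ 0)) (h ω)) = c • iT' :=
        funext fun ω => happ ω
      have hcond := condExp_smul (μ := μ) (m := m) c iT'
      calc ∫ ω in s, iT ω * (SimpleFunc.piecewise T' hT'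
              (SimpleFunc.const ℝ c) (SimpleFunc.const ℝ 0)) (h ω) ∂μ
          = ∫ ω in s, c * (iT ω * iT' ω) ∂μ :=
            integral_congr_ae (Eventually.of_forall fun ω => by simp only [happ]; ring)
        _ = c * ∫ ω in s, iT ω * iT' ω ∂μ := integral_const_mul c _
        _ = c * ∫ ω in s, (μ[iT|m]) ω * (μ[iT'|m]) ω ∂μ := by rw [base T' hT']
        _ = ∫ ω in s, c * ((μ[iT|m]) ω * (μ[iT'|m]) ω) ∂μ := (integral_const_mul c _).symm
        _ = ∫ ω in s, (μ[iT|m]) ω * (μ[fun ω => (SimpleFunc.piecewise T' hT'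
              (SimpleFunc.const ℝ c) (SimpleFunc.const ℝ 0)) (h ω)|m]) ω ∂μ := by
            refine integral_congr_ae (ae_restrict_of_ae ?_)
            rw [hfun]
            filter_upwards [hcond] with ω hω
            rw [hω]
            show c * ((μ[iT|m]) ω * (μ[iT'|m]) ω) = (μ[iT|m]) ω * (c * (μ[iT'|m]) ω)
            ring
    | @add ψ₁ ψ₂ hdisj ih₁ ih₂ =>
      obtain ⟨C₁, hC₁⟩ := ψ₁.exists_forall_norm_le
      obtain ⟨C₂, hC₂⟩ := ψ₂.exists_forall_norm_le
      have hint₁ : Integrable (fun ω => ψ₁ (h ω)) μ :=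
        ccb_integrable_of_bdd ((ψ₁.measurable.comp hh).aestronglyMeasurable (μ := μ))
          (fun ω => by simpa [Real.norm_eq_abs] using hC₁ (h ω))
      have hint₂ : Integrable (fun ω => ψ₂ (h ω)) μ :=
        ccb_integrable_of_bdd ((ψ₂.measurable.comp hh).aestronglyMeasurable (μ := μ))
          (fun ω => by simpa [Real.norm_eq_abs] using hC₂ (h ω))
      have hbd : ∃ Cb, ∀ ω, ‖iT ω‖ ≤ Cb := ⟨1, fun ω => by
        simpa [Real.norm_eq_abs] using hiT_bdd ω⟩
      have hintiT₁ : Integrable (fun ω => iT ω * ψ₁ (h ω)) μ :=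
        hint₁.bdd_mul (hiT_meas.aestronglyMeasurable (μ := μ)) (Eventually.of_forall hbd.choose_spec)
      have hintiT₂ : Integrable (fun ω => iT ω * ψ₂ (h ω)) μ :=
        hint₂.bdd_mul (hiT_meas.aestronglyMeasurable (μ := μ)) (Eventually.of_forall hbd.choose_spec)
      have hWb' : ∀ᵐ ω ∂μ, ‖(μ[iT|m]) ω‖ ≤ 1 := by
        filter_upwards [hWbdd] with ω hω using by simpa [Real.norm_eq_abs] using hω
      have hP₁ : Integrable (fun ω => (μ[iT|m]) ω * (μ[fun ω => ψ₁ (h ω)|m]) ω) μ :=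
        integrable_condExp.bdd_mul hWmeas hWb'
      have hP₂ : Integrable (fun ω => (μ[iT|m]) ω * (μ[fun ω => ψ₂ (h ω)|m]) ω) μ :=
        integrable_condExp.bdd_mul hWmeas hWb'
      have hfun : (fun ω => (ψ₁ + ψ₂) (h ω))
          = (fun ω => ψ₁ (h ω)) + fun ω => ψ₂ (h ω) := by
        funext ω; simp
      have hca := condExp_add (μ := μ) (m := m) hint₁ hint₂
      calc ∫ ω in s, iT ω * (ψ₁ + ψ₂) (h ω) ∂μ
          = ∫ ω in s, (iT ω * ψ₁ (h ω) + iT ω * ψ₂ (h ω)) ∂μ :=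
            integral_congr_ae (Eventually.of_forall fun ω => by simp only [SimpleFunc.coe_add, Pi.add_apply]; ring)
        _ = (∫ ω in s, iT ω * ψ₁ (h ω) ∂μ) + ∫ ω in s, iT ω * ψ₂ (h ω) ∂μ :=
            integral_add hintiT₁.restrict hintiT₂.restrict
        _ = (∫ ω in s, (μ[iT|m]) ω * (μ[fun ω => ψ₁ (h ω)|m]) ω ∂μ)
              + ∫ ω in s, (μ[iT|m]) ω * (μ[fun ω => ψ₂ (h ω)|m]) ω ∂μ := by rw [ih₁, ih₂]
        _ = ∫ ω in s, ((μ[iT|m]) ω * (μ[fun ω => ψ₁ (h ω)|m]) ω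
              + (μ[iT|m]) ω * (μ[fun ω => ψ₂ (h ω)|m]) ω) ∂μ :=
            (integral_add hP₁.restrict hP₂.restrict).symm
        _ = ∫ ω in s, (μ[iT|m]) ω * (μ[fun ω => (ψ₁ + ψ₂) (h ω)|m]) ω ∂μ := by
            refine integral_congr_ae (ae_restrict_of_ae ?_)
            rw [hfun]
            filter_upwards [hca] with ω hω
            rw [hω]
            show (μ[iT|m]) ω * (μ[fun ω => ψ₁ (h ω)|m]) ω
                + (μ[iT|m]) ω * (μ[fun ω => ψ₂ (h ω)|m]) ω
              = (μ[iT|m]) ω * ((μ[fun ω => ψ₁ (h ω)|m]) ω + (μ[fun ω => ψ₂ (h ω)|m]) ω)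
            ring
  -- approximation of h by simple functions
  let p : ℕ → SimpleFunc ℝ ℝ := fun n =>
    SimpleFunc.approxOn id measurable_id (Set.univ : Set ℝ) 0 (Set.mem_univ 0) n
  have htend : ∀ t : ℝ, Tendsto (fun n => p n t) atTop (𝓝 t) := fun t => by
    simpa using SimpleFunc.tendsto_approxOn (f := (id : ℝ → ℝ)) measurable_id
      (Set.mem_univ 0) (x := t) (by simp)
  have hpb : ∀ n t, |p n t| ≤ |t| + |t| := fun n t => by
    simpa [Real.norm_eq_abs] using SimpleFunc.norm_approxOn_zero_le (f := (id : ℝ → ℝ))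
      measurable_id (Set.mem_univ 0) t n
  have hnb : ∀ n ω, |p n (h ω)| ≤ 2 * C := fun n ω =>
    (hpb n (h ω)).trans (by have := hhb ω; linarith)
  have hint_n : ∀ n, Integrable (fun ω => p n (h ω)) μ := fun n =>
    ccb_integrable_of_bdd (((p n).measurable.comp hh).aestronglyMeasurable (μ := μ)) (hnb n)
  have hint_h : Integrable h μ :=
    ccb_integrable_of_bdd (hh.aestronglyMeasurable (μ := μ)) hhb
  have hWb' : ∀ᵐ ω ∂μ, ‖(μ[iT|m]) ω‖ ≤ 1 := by
    filter_upwards [hWbdd] with ω hω using by simpa [Real.norm_eq_abs] using hω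
  -- convergence of the left-hand side
  have hL : Tendsto (fun n => ∫ ω in s, iT ω * p n (h ω) ∂μ) atTop
      (𝓝 (∫ ω in s, iT ω * h ω ∂μ)) := by
    refine tendsto_integral_of_dominated_convergence (fun _ => 2*C)
      (fun n => (hiT_meas.mul ((p n).measurable.comp hh)).aestronglyMeasurable)
      (integrable_const _) (fun n => Eventually.of_forall fun ω => ?_)
      (Eventually.of_forall fun ω => ?_)
    · calc ‖iT ω * p n (h ω)‖ = |iT ω| * |p n (h ω)| := by rw [Real.norm_eq_abs, abs_mul]
        _ ≤ 1 * (2*C) := mul_le_mul (hiT_bdd ω) (hnb n ω) (abs_nonneg _) zero_le_one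
        _ = 2*C := one_mul _
    · exact (htend (h ω)).const_mul (iT ω)
  -- the L¹ error
  have hd : Tendsto (fun n => ∫ ω, |p n (h ω) - h ω| ∂μ) atTop (𝓝 0) := by
    have h0 : (0:ℝ) = ∫ ω, (0:ℝ) ∂μ := by simp
    rw [h0]
    have hpm : ∀ n, Measurable[mΩ] fun ω => p n (h ω) := fun n => (p n).measurable.comp hh
    have hδm : ∀ n, Measurable[mΩ] fun ω => |p n (h ω) - h ω| := fun n =>
      measurable_abs.comp ((hpm n).sub hh)
    refine tendsto_integral_of_dominated_convergence (fun _ => 3*C)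
      (fun n => (hδm n).aestronglyMeasurable (μ := μ))
      (integrable_const _) (fun n => Eventually.of_forall fun ω => ?_)
      (Eventually.of_forall fun ω => ?_)
    · rw [Real.norm_eq_abs, abs_abs]
      have h1 := hnb n ω
      have h2 := hhb ω
      calc |p n (h ω) - h ω| ≤ |p n (h ω)| + |h ω| := abs_sub _ _
        _ ≤ 3*C := by linarith
    · have h1 : Tendsto (fun n => p n (h ω) - h ω) atTop (𝓝 (h ω - h ω)) :=
        (htend (h ω)).sub tendsto_const_nhds
      simpa using h1.abs
  have hq : ∀ n, ∫ ω in s, iT ω * p n (h ω) ∂μ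
      = ∫ ω in s, (μ[iT|m]) ω * (μ[fun ω => p n (h ω)|m]) ω ∂μ := fun n => hsimple (p n)
  have hPint : ∀ (k : Ω → ℝ), Integrable (fun ω => (μ[iT|m]) ω * (μ[k|m]) ω) μ :=
    fun k => integrable_condExp.bdd_mul hWmeas hWb'
  -- the error estimate on the right-hand side
  have hest : ∀ n, |(∫ ω in s, (μ[iT|m]) ω * (μ[fun ω => p n (h ω)|m]) ω ∂μ)
      - ∫ ω in s, (μ[iT|m]) ω * (μ[h|m]) ω ∂μ| ≤ ∫ ω, |p n (h ω) - h ω| ∂μ := by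
    intro n
    have hδint : Integrable (fun ω => (μ[fun ω => p n (h ω)|m]) ω - (μ[h|m]) ω) μ :=
      integrable_condExp.sub integrable_condExp
    have hsub : (∫ ω in s, (μ[iT|m]) ω * (μ[fun ω => p n (h ω)|m]) ω ∂μ)
        - ∫ ω in s, (μ[iT|m]) ω * (μ[h|m]) ω ∂μ
        = ∫ ω in s, (μ[iT|m]) ω * ((μ[fun ω => p n (h ω)|m]) ω - (μ[h|m]) ω) ∂μ := by
      rw [← integral_sub ((hPint _)).restrict ((hPint _)).restrict]
      exact integral_congr_ae (Eventually.of_forall fun ω => by ring)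
    rw [hsub]
    have hmul_int : Integrable
        (fun ω => (μ[iT|m]) ω * ((μ[fun ω => p n (h ω)|m]) ω - (μ[h|m]) ω)) μ :=
      hδint.bdd_mul hWmeas hWb'
    calc |∫ ω in s, (μ[iT|m]) ω * ((μ[fun ω => p n (h ω)|m]) ω - (μ[h|m]) ω) ∂μ|
        ≤ ∫ ω in s, ‖(μ[iT|m]) ω * ((μ[fun ω => p n (h ω)|m]) ω - (μ[h|m]) ω)‖ ∂μ :=
          by rw [← Real.norm_eq_abs]; exact norm_integral_le_integral_norm _
      _ ≤ ∫ ω in s, |(μ[fun ω => p n (h ω)|m]) ω - (μ[h|m]) ω| ∂μ := by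
          refine integral_mono_ae hmul_int.norm.restrict hδint.abs.restrict
            (ae_restrict_of_ae ?_)
          filter_upwards [hWbdd] with ω hω
          rw [Real.norm_eq_abs, abs_mul]
          calc |(μ[iT|m]) ω| * |(μ[fun ω => p n (h ω)|m]) ω - (μ[h|m]) ω|
              ≤ 1 * |(μ[fun ω => p n (h ω)|m]) ω - (μ[h|m]) ω| :=
                mul_le_mul_of_nonneg_right hω (abs_nonneg _)
            _ = _ := one_mul _
      _ ≤ ∫ ω, |(μ[fun ω => p n (h ω)|m]) ω - (μ[h|m]) ω| ∂μ :=
          setIntegral_le_integral (s := s) hδint.abs (Eventually.of_forall fun ω => abs_nonneg _)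
      _ = ∫ ω, |(μ[(fun ω => p n (h ω)) - h|m]) ω| ∂μ := by
          refine integral_congr_ae ?_
          filter_upwards [condExp_sub (μ := μ) (m := m) (hint_n n) hint_h] with ω hω
          rw [hω]; rfl
      _ ≤ ∫ ω, |((fun ω => p n (h ω)) - h) ω| ∂μ := integral_abs_condExp_le (μ := μ) (m := m) _
      _ = ∫ ω, |p n (h ω) - h ω| ∂μ := rfl
  -- conclude
  have hR : Tendsto (fun n => ∫ ω in s, (μ[iT|m]) ω * (μ[fun ω => p n (h ω)|m]) ω ∂μ)
      atTop (𝓝 (∫ ω in s, (μ[iT|m]) ω * (μ[h|m]) ω ∂μ)) := by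
    rw [tendsto_iff_dist_tendsto_zero]
    simp_rw [Real.dist_eq]
    exact squeeze_zero (fun n => abs_nonneg _) hest hd
  have hL' : Tendsto (fun n => ∫ ω in s, (μ[iT|m]) ω * (μ[fun ω => p n (h ω)|m]) ω ∂μ)
      atTop (𝓝 (∫ ω in s, iT ω * h ω ∂μ)) := by
    refine hL.congr fun n => hq n
  exact tendsto_nhds_unique hL' hR


/-- Conditional independence of `Z` and `ε` given `X` implies
`E[ε | σ(X,Z)] = E[ε | σ(X)] = e ∘ X` a.e. -/
lemma ccb_condexp_eq_e [StandardBorelSpace Ω] [Nonempty Ω]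
    {𝒳 𝒵 : Type*} [m𝒳 : MeasurableSpace 𝒳] [m𝒵 : MeasurableSpace 𝒵]
    {X : Ω → 𝒳} {Z : Ω → 𝒵} (hX : Measurable X) (hZ : Measurable Z)
    {ε : Ω → ℝ} (hε : Measurable ε) {Cε : ℝ} (hεb : ∀ ω, |ε ω| ≤ Cε)
    (hind : CondIndepFun (MeasurableSpace.comap X m𝒳) hX.comap_le Z ε μ)
    {e : 𝒳 → ℝ} (he : Measurable e) {Ce : ℝ} (heb : ∀ x, |e x| ≤ Ce)
    (hever : (fun ω => e (X ω)) =ᵐ[μ] μ[ε|MeasurableSpace.comap X m𝒳]) :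
    μ[ε|MeasurableSpace.comap (fun ω => (X ω, Z ω)) inferInstance]
      =ᵐ[μ] fun ω => e (X ω) := by
  have hCε0 : 0 ≤ Cε := le_trans (abs_nonneg _) (hεb Classical.ofNonempty)
  have hCe0 : 0 ≤ Ce := le_trans (abs_nonneg _) (heb (X Classical.ofNonempty))
  have hXZ : Measurable fun ω => (X ω, Z ω) := hX.prodMk hZ
  have hm2 : MeasurableSpace.comap (fun ω => (X ω, Z ω))
      (inferInstance : MeasurableSpace (𝒳 × 𝒵)) ≤ mΩ := hXZ.comap_le
  have hεint : Integrable ε μ :=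
    ccb_integrable_of_bdd (hε.aestronglyMeasurable (μ := μ)) hεb
  have heXint : Integrable (fun ω => e (X ω)) μ :=
    ccb_integrable_of_bdd ((he.comp hX).aestronglyMeasurable (μ := μ)) (fun ω => heb (X ω))
  -- the rectangle identity
  have core : ∀ (Cs : Set 𝒳), MeasurableSet Cs → ∀ (B : Set 𝒵), MeasurableSet B →
      ∫ ω in X ⁻¹' Cs ∩ Z ⁻¹' B, ε ω ∂μ = ∫ ω in X ⁻¹' Cs ∩ Z ⁻¹' B, e (X ω) ∂μ := by
    intro Cs hCs B hB
    have hsX : MeasurableSet[MeasurableSpace.comap X m𝒳] (X ⁻¹' Cs) := ⟨Cs, hCs, rfl⟩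
    have hKey := ccb_factorization hX.comap_le hZ hε hεb hind hB hsX
    have heX_mX : Measurable[MeasurableSpace.comap X m𝒳] fun ω => e (X ω) :=
      fun t ht => ⟨e ⁻¹' t, he ht, rfl⟩
    have hV : Measurable[MeasurableSpace.comap X m𝒳]
        fun ω => (X ⁻¹' Cs).indicator (fun _ => (1:ℝ)) ω * e (X ω) :=
      (measurable_const.indicator hsX).mul heX_mX
    have hVb : ∀ ω, |(X ⁻¹' Cs).indicator (fun _ => (1:ℝ)) ω * e (X ω)| ≤ Ce := by
      intro ω
      by_cases hω : ω ∈ X ⁻¹' Cs <;> simp [Set.indicator_apply, hω, abs_mul, heb (X ω), hCe0]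
    have hiB_int : Integrable ((Z ⁻¹' B).indicator (fun _ => (1:ℝ))) μ :=
      ccb_integrable_of_bdd
        ((measurable_const.indicator (hZ hB)).aestronglyMeasurable (μ := μ))
        (ccb_indicator_abs_le _)
    calc ∫ ω in X ⁻¹' Cs ∩ Z ⁻¹' B, ε ω ∂μ
        = ∫ ω in X ⁻¹' Cs, (Z ⁻¹' B).indicator (fun _ => (1:ℝ)) ω * ε ω ∂μ :=
          ccb_setIntegral_inter (hZ hB) ε
      _ = ∫ ω in X ⁻¹' Cs, (μ[(Z ⁻¹' B).indicator (fun _ => (1:ℝ))|MeasurableSpace.comap X m𝒳]) ω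
            * (μ[ε|MeasurableSpace.comap X m𝒳]) ω ∂μ := hKey
      _ = ∫ ω in X ⁻¹' Cs, (μ[(Z ⁻¹' B).indicator (fun _ => (1:ℝ))|MeasurableSpace.comap X m𝒳]) ω
            * e (X ω) ∂μ := by
          refine integral_congr_ae (ae_restrict_of_ae ?_)
          filter_upwards [hever] with ω hω
          rw [← hω]
      _ = ∫ ω, (X ⁻¹' Cs).indicator (fun _ => (1:ℝ)) ω
            * ((μ[(Z ⁻¹' B).indicator (fun _ => (1:ℝ))|MeasurableSpace.comap X m𝒳]) ω
              * e (X ω)) ∂μ := ccb_setIntegral_eq (hX hCs) _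
      _ = ∫ ω, ((X ⁻¹' Cs).indicator (fun _ => (1:ℝ)) ω * e (X ω))
            * (μ[(Z ⁻¹' B).indicator (fun _ => (1:ℝ))|MeasurableSpace.comap X m𝒳]) ω ∂μ :=
          integral_congr_ae (Eventually.of_forall fun ω => by ring)
      _ = ∫ ω, ((X ⁻¹' Cs).indicator (fun _ => (1:ℝ)) ω * e (X ω))
            * (Z ⁻¹' B).indicator (fun _ => (1:ℝ)) ω ∂μ :=
          (ccb_integral_mul_condexp hX.comap_le hV hVb hiB_int).symm
      _ = ∫ ω, (X ⁻¹' Cs).indicator (fun _ => (1:ℝ)) ω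
            * ((Z ⁻¹' B).indicator (fun _ => (1:ℝ)) ω * e (X ω)) ∂μ :=
          integral_congr_ae (Eventually.of_forall fun ω => by ring)
      _ = ∫ ω in X ⁻¹' Cs, (Z ⁻¹' B).indicator (fun _ => (1:ℝ)) ω * e (X ω) ∂μ :=
          (ccb_setIntegral_eq (hX hCs) _).symm
      _ = ∫ ω in X ⁻¹' Cs ∩ Z ⁻¹' B, e (X ω) ∂μ := (ccb_setIntegral_inter (hZ hB) _).symm
  -- extension from rectangles to the full product σ-algebra via finite measures
  set c : ℝ := Cε + Ce + 1 with hc_def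
  have hcc : ∀ ω, 0 ≤ ε ω + c ∧ ε ω + c ≤ c + c := fun ω => by
    obtain ⟨h1, h2⟩ := abs_le.mp (hεb ω); constructor <;> [skip; skip] <;> simp [hc_def] <;> linarith
  have hcc' : ∀ ω, 0 ≤ e (X ω) + c ∧ e (X ω) + c ≤ c + c := fun ω => by
    obtain ⟨h1, h2⟩ := abs_le.mp (heb (X ω)); constructor <;> simp [hc_def] <;> linarith
  -- evaluation of the pushforward measures with density
  have key : ∀ (k : Ω → ℝ), Measurable k → (∀ ω, 0 ≤ k ω) → (∀ ω, k ω ≤ c + c) →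
      ∀ {E : Set (𝒳 × 𝒵)}, MeasurableSet E →
      ((μ.withDensity fun ω => ENNReal.ofReal (k ω)).map fun ω => (X ω, Z ω)) E
        = ENNReal.ofReal (∫ ω in (fun ω => (X ω, Z ω)) ⁻¹' E, k ω ∂μ) := by
    intro k hk hk0 hkb E hE
    have hkint : Integrable k μ := ccb_integrable_of_bdd (hk.aestronglyMeasurable (μ := μ))
      (fun ω => abs_le.mpr ⟨by have := hk0 ω; linarith, hkb ω⟩)
    rw [Measure.map_apply hXZ hE, withDensity_apply _ (hXZ hE),
      ← ofReal_integral_eq_lintegral_ofReal hkint.restrict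
        (ae_restrict_of_ae (Eventually.of_forall hk0))]
  have hfin : ∀ (k : Ω → ℝ), Measurable k → (∀ ω, 0 ≤ k ω) → (∀ ω, k ω ≤ c + c) →
      IsFiniteMeasure ((μ.withDensity fun ω => ENNReal.ofReal (k ω)).map
        fun ω => (X ω, Z ω)) := by
    intro k hk hk0 hkb
    constructor
    rw [key k hk hk0 hkb MeasurableSet.univ]
    exact ENNReal.ofReal_lt_top
  have hεm : Measurable fun ω => ε ω + c := hε.add measurable_const
  have heXm : Measurable fun ω => e (X ω) + c := (he.comp hX).add measurable_const
  have hν : ((μ.withDensity fun ω => ENNReal.ofReal (ε ω + c)).map fun ω => (X ω, Z ω))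
      = (μ.withDensity fun ω => ENNReal.ofReal (e (X ω) + c)).map fun ω => (X ω, Z ω) := by
    haveI h1 := hfin _ hεm (fun ω => (hcc ω).1) (fun ω => (hcc ω).2)
    haveI h2 := hfin _ heXm (fun ω => (hcc' ω).1) (fun ω => (hcc' ω).2)
    have hrect : ∀ (Cs : Set 𝒳), MeasurableSet Cs → ∀ (B : Set 𝒵), MeasurableSet B →
        ((μ.withDensity fun ω => ENNReal.ofReal (ε ω + c)).map fun ω => (X ω, Z ω)) (Cs ×ˢ B)
          = ((μ.withDensity fun ω => ENNReal.ofReal (e (X ω) + c)).map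
              fun ω => (X ω, Z ω)) (Cs ×ˢ B) := by
      intro Cs hCs B hB
      rw [key _ hεm (fun ω => (hcc ω).1) (fun ω => (hcc ω).2) (hCs.prod hB),
        key _ heXm (fun ω => (hcc' ω).1) (fun ω => (hcc' ω).2) (hCs.prod hB)]
      congr 1
      have hpre : (fun ω => (X ω, Z ω)) ⁻¹' (Cs ×ˢ B) = X ⁻¹' Cs ∩ Z ⁻¹' B := rfl
      rw [hpre, integral_add hεint.restrict (integrable_const c).restrict,
        integral_add heXint.restrict (integrable_const c).restrict, core Cs hCs B hB]
    refine ext_of_generate_finite _ generateFrom_prod.symm isPiSystem_prod ?_ ?_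
    · rintro _ ⟨Cs, hCs, B, hB, rfl⟩
      exact hrect Cs hCs B hB
    · have := hrect Set.univ MeasurableSet.univ Set.univ MeasurableSet.univ
      rwa [Set.univ_prod_univ] at this
  -- conclude the set-integral identity on the comap σ-algebra
  have hg_eq : ∀ s : Set Ω,
      MeasurableSet[MeasurableSpace.comap (fun ω => (X ω, Z ω)) inferInstance] s → μ s < ⊤ →
      ∫ ω in s, e (X ω) ∂μ = ∫ ω in s, ε ω ∂μ := by
    rintro _ ⟨D, hD, rfl⟩ _
    have h1 := key _ hεm (fun ω => (hcc ω).1) (fun ω => (hcc ω).2) hD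
    have h2 := key _ heXm (fun ω => (hcc' ω).1) (fun ω => (hcc' ω).2) hD
    rw [hν, h2] at h1
    have ha : 0 ≤ ∫ ω in (fun ω => (X ω, Z ω)) ⁻¹' D, (e (X ω) + c) ∂μ :=
      integral_nonneg fun ω => (hcc' ω).1
    have hb : 0 ≤ ∫ ω in (fun ω => (X ω, Z ω)) ⁻¹' D, (ε ω + c) ∂μ :=
      integral_nonneg fun ω => (hcc ω).1
    have heq := (ENNReal.ofReal_eq_ofReal_iff ha hb).mp h1
    rw [integral_add heXint.restrict (integrable_const c).restrict,
      integral_add hεint.restrict (integrable_const c).restrict] at heq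
    linarith
  have hgm : Measurable[MeasurableSpace.comap (fun ω => (X ω, Z ω)) inferInstance]
      fun ω => e (X ω) :=
    fun t ht => ⟨(fun p : 𝒳 × 𝒵 => e p.1) ⁻¹' t, (he.comp measurable_fst) ht, rfl⟩
  exact (ae_eq_condExp_of_forall_setIntegral_eq hm2 hεint
    (fun s _ _ => heXint.integrableOn) hg_eq
    hgm.stronglyMeasurable.aestronglyMeasurable).symm


end CCBAux2


/-- Identification identity in CCB-IV without completeness.
Under CCB-IV assumptions (i), (ii) and (iv), one has
`E[Y | Z ; R_Z = 1] = E[g*(A, X) | Z ; R_Z = 1]` almost surely, where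
`g*(x, a) = f (a, x) + e x` is the CATE. -/
theorem ccb_iv_standard_identification
    {Ω : Type*} [mΩ : MeasurableSpace Ω] [StandardBorelSpace Ω] [Nonempty Ω]
    {𝒰 𝒳 𝒜 𝒵 : Type*} [MeasurableSpace 𝒰] [MeasurableSpace 𝒳]
    [MeasurableSpace 𝒜] [MeasurableSpace 𝒵]
    (μ : Measure Ω) [IsProbabilityMeasure μ]
    (U : Ω → 𝒰) (X : Ω → 𝒳) (A : Ω → 𝒜) (Y : Ω → ℝ) (Z : Ω → 𝒵) (RX RZ : Ω → Bool)
    (hU : Measurable U) (hX : Measurable X) (hA : Measurable A) (hY : Measurable Y)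
    (hZ : Measurable Z) (hRX : Measurable RX) (hRZ : Measurable RZ)
    -- positive probability of the conditioning events
    (hSZpos : μ {ω | RZ ω = true} ≠ 0)
    (hSXZpos : μ ({ω | RX ω = true} ∩ {ω | RZ ω = true}) ≠ 0)
    -- (i) structured reward : Y = f (A, X) + ε with ε ⫫ A | (X, U)
    (f : 𝒜 × 𝒳 → ℝ) (hf : Measurable f) (Cf : ℝ) (hfbdd : ∀ p, |f p| ≤ Cf)
    (ε : Ω → ℝ) (hε : Measurable ε) (Cε : ℝ) (hεbdd : ∀ ω, |ε ω| ≤ Cε)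
    (hreward : ∀ ω, Y ω = f (A ω, X ω) + ε ω)
    (hεA : CondIndepFun (MeasurableSpace.comap (fun ω => (X ω, U ω)) inferInstance)
      ((hX.prodMk hU).comap_le) ε A μ)
    -- (ii) IV independence : Z ⫫ (U, ε) | X
    (hIVindep : CondIndepFun (MeasurableSpace.comap X inferInstance) hX.comap_le
      Z (fun ω => (U ω, ε ω)) μ)
    -- (iv) missingness structure : RZ ⫫ (U, A, ε) | (X, Z)
    (hRZmiss : CondIndepFun (MeasurableSpace.comap (fun ω => (X ω, Z ω)) inferInstance)
      ((hX.prodMk hZ).comap_le) RZ (fun ω => (U ω, A ω, ε ω)) μ)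
    -- the CATE : g* (x, a) = f (a, x) + e x with e a bounded measurable version of E[ε | X = x]
    (e : 𝒳 → ℝ) (he : Measurable e) (Ce : ℝ) (hebdd : ∀ x, |e x| ≤ Ce)
    (hever : (fun ω => e (X ω)) =ᵐ[μ] μ[ε | MeasurableSpace.comap X inferInstance]) :
    (μ[|{ω | RZ ω = true}])[Y | MeasurableSpace.comap Z inferInstance]
      =ᵐ[μ[|{ω | RZ ω = true}]]
    (μ[|{ω | RZ ω = true}])[(fun ω => f (A ω, X ω) + e (X ω)) |
      MeasurableSpace.comap Z inferInstance] := by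
    classical
  set S : Set Ω := {ω | RZ ω = true} with hS_def
  have hS : MeasurableSet S := hRZ (measurableSet_singleton true)
  haveI : IsProbabilityMeasure (μ[|S]) := cond_isProbabilityMeasure hSZpos
  have hXZ : Measurable fun ω => (X ω, Z ω) := hX.prodMk hZ
  have hm2 : MeasurableSpace.comap (fun ω => (X ω, Z ω))
      (inferInstance : MeasurableSpace (𝒳 × 𝒵)) ≤ mΩ := hXZ.comap_le
  -- conditional independences for the pairs we need
  have hZε : CondIndepFun (MeasurableSpace.comap X inferInstance) hX.comap_le Z ε μ :=
    hIVindep.comp measurable_id measurable_snd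
  have hRZε : CondIndepFun (MeasurableSpace.comap (fun ω => (X ω, Z ω)) inferInstance)
      hm2 RZ ε μ :=
    hRZmiss.comp measurable_id (measurable_snd.comp measurable_snd)
  -- `E[ε | σ(X,Z)] = e ∘ X` a.e.
  have ha : μ[ε|MeasurableSpace.comap (fun ω => (X ω, Z ω)) inferInstance]
      =ᵐ[μ] fun ω => e (X ω) :=
    ccb_condexp_eq_e hX hZ hε hεbdd hZε he hebdd hever
  -- the crux set-integral identity
  have cruxB : ∀ B : Set 𝒵, MeasurableSet B →
      ∫ ω in Z ⁻¹' B ∩ S, ε ω ∂μ = ∫ ω in Z ⁻¹' B ∩ S, e (X ω) ∂μ := by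
    intro B hB
    have hsB : MeasurableSet[MeasurableSpace.comap (fun ω => (X ω, Z ω)) inferInstance]
        (Z ⁻¹' B) := ⟨Prod.snd ⁻¹' B, measurable_snd hB, rfl⟩
    have hKey := ccb_factorization hm2 hRZ hε hεbdd hRZε (measurableSet_singleton true) hsB
    have heX_m2 : Measurable[MeasurableSpace.comap (fun ω => (X ω, Z ω)) inferInstance]
        fun ω => e (X ω) :=
      fun t ht => ⟨(fun p : 𝒳 × 𝒵 => e p.1) ⁻¹' t, (he.comp measurable_fst) ht, rfl⟩
    have hV : Measurable[MeasurableSpace.comap (fun ω => (X ω, Z ω)) inferInstance]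
        fun ω => (Z ⁻¹' B).indicator (fun _ => (1:ℝ)) ω * e (X ω) :=
      (measurable_const.indicator hsB).mul heX_m2
    have hCe0 : 0 ≤ Ce := le_trans (abs_nonneg _) (hebdd (X Classical.ofNonempty))
    have hVb : ∀ ω, |(Z ⁻¹' B).indicator (fun _ => (1:ℝ)) ω * e (X ω)| ≤ Ce := by
      intro ω
      by_cases hω : ω ∈ Z ⁻¹' B <;>
        simp [Set.indicator_apply, hω, abs_mul, hebdd (X ω), hCe0]
    have hiS_int : Integrable ((RZ ⁻¹' {true}).indicator (fun _ => (1:ℝ))) μ :=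
      ccb_integrable_of_bdd
        ((measurable_const.indicator (hRZ (measurableSet_singleton true))).aestronglyMeasurable
          (μ := μ)) (ccb_indicator_abs_le _)
    have hSpre : S = RZ ⁻¹' {true} := rfl
    rw [hSpre]
    calc ∫ ω in Z ⁻¹' B ∩ RZ ⁻¹' {true}, ε ω ∂μ
        = ∫ ω in Z ⁻¹' B, (RZ ⁻¹' {true}).indicator (fun _ => (1:ℝ)) ω * ε ω ∂μ :=
          ccb_setIntegral_inter (hRZ (measurableSet_singleton true)) ε
      _ = ∫ ω in Z ⁻¹' B,
            (μ[(RZ ⁻¹' {true}).indicator (fun _ => (1:ℝ))|MeasurableSpace.comap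
              (fun ω => (X ω, Z ω)) inferInstance]) ω
            * (μ[ε|MeasurableSpace.comap (fun ω => (X ω, Z ω)) inferInstance]) ω ∂μ := hKey
      _ = ∫ ω in Z ⁻¹' B,
            (μ[(RZ ⁻¹' {true}).indicator (fun _ => (1:ℝ))|MeasurableSpace.comap
              (fun ω => (X ω, Z ω)) inferInstance]) ω * e (X ω) ∂μ := by
          refine integral_congr_ae (ae_restrict_of_ae ?_)
          filter_upwards [ha] with ω hω
          rw [hω]
      _ = ∫ ω, (Z ⁻¹' B).indicator (fun _ => (1:ℝ)) ω
            * ((μ[(RZ ⁻¹' {true}).indicator (fun _ => (1:ℝ))|MeasurableSpace.comap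
              (fun ω => (X ω, Z ω)) inferInstance]) ω * e (X ω)) ∂μ :=
          ccb_setIntegral_eq (hZ hB) _
      _ = ∫ ω, ((Z ⁻¹' B).indicator (fun _ => (1:ℝ)) ω * e (X ω))
            * (μ[(RZ ⁻¹' {true}).indicator (fun _ => (1:ℝ))|MeasurableSpace.comap
              (fun ω => (X ω, Z ω)) inferInstance]) ω ∂μ :=
          integral_congr_ae (Filter.Eventually.of_forall fun ω => by ring)
      _ = ∫ ω, ((Z ⁻¹' B).indicator (fun _ => (1:ℝ)) ω * e (X ω))
            * (RZ ⁻¹' {true}).indicator (fun _ => (1:ℝ)) ω ∂μ :=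
          (ccb_integral_mul_condexp hm2 hV hVb hiS_int).symm
      _ = ∫ ω, (Z ⁻¹' B).indicator (fun _ => (1:ℝ)) ω
            * ((RZ ⁻¹' {true}).indicator (fun _ => (1:ℝ)) ω * e (X ω)) ∂μ :=
          integral_congr_ae (Filter.Eventually.of_forall fun ω => by ring)
      _ = ∫ ω in Z ⁻¹' B, (RZ ⁻¹' {true}).indicator (fun _ => (1:ℝ)) ω * e (X ω) ∂μ :=
          (ccb_setIntegral_eq (hZ hB) _).symm
      _ = ∫ ω in Z ⁻¹' B ∩ RZ ⁻¹' {true}, e (X ω) ∂μ :=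
          (ccb_setIntegral_inter (hRZ (measurableSet_singleton true)) _).symm
  -- translating set integrals for the conditional measure
  have hcond_int : ∀ (k : Ω → ℝ) (B : Set 𝒵), MeasurableSet B →
      ∫ ω in Z ⁻¹' B, k ω ∂(μ[|S]) = (μ S)⁻¹.toReal * ∫ ω in Z ⁻¹' B ∩ S, k ω ∂μ := by
    intro k B hB
    have hcd : μ[|S] = (μ S)⁻¹ • μ.restrict S := rfl
    rw [hcd, Measure.restrict_smul, integral_smul_measure,
      Measure.restrict_restrict (hZ hB), smul_eq_mul]
  -- integrabilities under the conditional measure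
  have hεint' : Integrable ε (μ[|S]) :=
    ccb_integrable_of_bdd (hε.aestronglyMeasurable (μ := μ[|S])) hεbdd
  have heXint' : Integrable (fun ω => e (X ω)) (μ[|S]) :=
    ccb_integrable_of_bdd ((he.comp hX).aestronglyMeasurable (μ := μ[|S]))
      (fun ω => hebdd (X ω))
  have hFint' : Integrable (fun ω => f (A ω, X ω)) (μ[|S]) :=
    ccb_integrable_of_bdd ((hf.comp (hA.prodMk hX)).aestronglyMeasurable (μ := μ[|S]))
      (fun ω => hfbdd (A ω, X ω))
  -- key : conditional expectations of ε and e∘X given Z agree under μ[|S]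
  have hkey : (μ[|S])[ε|MeasurableSpace.comap Z inferInstance]
      =ᵐ[μ[|S]] (μ[|S])[fun ω => e (X ω)|MeasurableSpace.comap Z inferInstance] := by
    refine (ae_eq_condExp_of_forall_setIntegral_eq hZ.comap_le hεint'
      (fun s _ _ => integrable_condExp.integrableOn) ?_
      stronglyMeasurable_condExp.aestronglyMeasurable).symm
    rintro _ ⟨B, hB, rfl⟩ _
    rw [setIntegral_condExp hZ.comap_le heXint' ⟨B, hB, rfl⟩,
      hcond_int _ B hB, hcond_int _ B hB, cruxB B hB]
  -- assemble
  have hYfun : Y = fun ω => f (A ω, X ω) + ε ω := funext hreward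
  rw [hYfun]
  have h1 : (μ[|S])[fun ω => f (A ω, X ω) + ε ω|MeasurableSpace.comap Z inferInstance]
      =ᵐ[μ[|S]] (μ[|S])[fun ω => f (A ω, X ω)|MeasurableSpace.comap Z inferInstance]
        + (μ[|S])[ε|MeasurableSpace.comap Z inferInstance] := condExp_add hFint' hεint' _
  have h2 : (μ[|S])[fun ω => f (A ω, X ω) + e (X ω)|MeasurableSpace.comap Z inferInstance]
      =ᵐ[μ[|S]] (μ[|S])[fun ω => f (A ω, X ω)|MeasurableSpace.comap Z inferInstance]
        + (μ[|S])[fun ω => e (X ω)|MeasurableSpace.comap Z inferInstance] :=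
    condExp_add hFint' heXint' _
  exact h1.trans ((EventuallyEq.rfl.add hkey).trans h2.symm)
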